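/- Let l ≥ 3 be an integer, ω a primitive root of unity of degree l-1 in an algebraically closed field K of characteristic zero, and let G_l be the subgroup of Aut(A^n) generated by the transformations (x_1,...,x_n) ↦ (x_1 + t·x_2^l, x_2,...,x_n) for t ∈ K and all permutations of coordinates. Then every element of G_l maps each pair of points of the form (P, ωP) with P ∈ K^n to a pair of the same form; in particular G_l does not act 2-transitively on A^n \ {0} for n ≥ 2. -/

import Mathlib

/-- For l ≥ 3 and ω a primitive (l-1)-th root of unity, the group G_l generated by
the shears (x₁,...,xₙ) ↦ (x₁ + t·x₂ˡ, x₂,...,xₙ) and coordinate permutations sends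
each pair (P, ωP) to a pair of the same form; in particular it is not 2-transitive
on Aⁿ \ {0} for n ≥ 2. -/
theorem stmt_19 {K : Type*} [Field K] [IsAlgClosed K] [CharZero K]
    {n : ℕ} (hn : 2 ≤ n) (l : ℕ) (hl : 3 ≤ l) (ω : K)
    (hω : ω ^ (l - 1) = 1) (hωprim : ∀ k : ℕ, 0 < k → k < l - 1 → ω ^ k ≠ 1) :
    let S : Set (Equiv.Perm (Fin n → K)) :=
      {g | (∃ t : K, ∀ x : Fin n → K,
              g x = Function.update x ⟨0, by omega⟩
                (x ⟨0, by omega⟩ + t * (x ⟨1, by omega⟩) ^ l)) ∨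
           (∃ π : Equiv.Perm (Fin n), ∀ x : Fin n → K, g x = x ∘ π)}
    (∀ g ∈ Subgroup.closure S, ∀ P : Fin n → K,
        g (fun i => ω * P i) = fun i => ω * g P i) ∧
    ¬ (∀ P1 P2 Q1 Q2 : Fin n → K,
        P1 ≠ 0 → P2 ≠ 0 → Q1 ≠ 0 → Q2 ≠ 0 → P1 ≠ P2 → Q1 ≠ Q2 →
        ∃ g ∈ Subgroup.closure S, g P1 = Q1 ∧ g P2 = Q2) := by
  intro S
  have hωl : ω ^ l = ω := by
    have : l - 1 + 1 = l := by omega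
    calc ω ^ l = ω ^ (l - 1) * ω := by rw [← pow_succ, this]
    _ = ω := by rw [hω, one_mul]
  have key : ∀ g ∈ Subgroup.closure S, ∀ P : Fin n → K,
      g (fun i => ω * P i) = fun i => ω * g P i := by
    intro g hg
    induction hg using Subgroup.closure_induction with
    | mem x hx =>
      intro P
      rcases hx with ⟨t, ht⟩ | ⟨π, hπ⟩
      · rw [ht, ht]
        funext i
        rcases eq_or_ne i ⟨0, by omega⟩ with rfl | hi
        · simp only [Function.update_self]
          rw [mul_pow, hωl]
          ring
        · simp [Function.update_of_ne hi]
      · rw [hπ, hπ]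
        rfl
    | one => intro P; rfl
    | mul x y hx hy ihx ihy =>
      intro P
      show x (y _) = _
      rw [ihy, ihx]
      rfl
    | inv x hx ih =>
      intro P
      have := ih (x⁻¹ P)
      apply x.injective
      show x (x⁻¹ _) = _
      rw [← Equiv.Perm.mul_apply x x⁻¹, mul_inv_cancel, Equiv.Perm.one_apply]
      rw [this]
      funext i
      rw [← Equiv.Perm.mul_apply x x⁻¹, mul_inv_cancel, Equiv.Perm.one_apply]
  refine ⟨key, fun h2t => ?_⟩
  have hω0 : ω ≠ 0 := by
    intro h
    rw [h] at hω
    simp [zero_pow, show l - 1 ≠ 0 by omega] at hω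
  have hω1 : ω ≠ 1 := by
    intro h
    exact hωprim 1 one_pos (by omega) (by rw [h, one_pow])
  set e0 : Fin n → K := fun i => if i = ⟨0, by omega⟩ then 1 else 0 with he0
  set e1 : Fin n → K := fun i => if i = ⟨1, by omega⟩ then 1 else 0 with he1
  have h01 : (⟨0, by omega⟩ : Fin n) ≠ ⟨1, by omega⟩ := by
    simp [Fin.ext_iff]
  have he00 : e0 ⟨0, by omega⟩ = 1 := by simp [he0]
  have he10 : e1 ⟨0, by omega⟩ = 0 := by simp [he1, h01]
  obtain ⟨g, hg, hg1, hg2⟩ := h2t e0 (fun i => ω * e0 i) e0 e1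
    (fun h => by simpa [he00] using congrFun h ⟨0, by omega⟩)
    (fun h => by
      have := congrFun h ⟨0, by omega⟩
      simp [he00] at this
      exact hω0 this)
    (fun h => by simpa [he00] using congrFun h ⟨0, by omega⟩)
    (fun h => by simpa [he1] using congrFun h ⟨1, by omega⟩)
    (fun h => by
      have := congrFun h ⟨0, by omega⟩
      simp [he00] at this
      exact hω1 this.symm)
    (fun h => by simpa [he00, he10] using congrFun h ⟨0, by omega⟩)
  have := key g hg e0
  rw [hg1, hg2] at this
  have := congrFun this ⟨0, by omega⟩
  rw [he10, he00, mul_one] at this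
  exact hω0 this.symm
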